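/- Let (R, m) be a Cohen-Macaulay local ring of dimension one in which every m-primary ideal has a principal reduction, and let I be a regular ideal of R. If I is a partial trace ideal of I (i.e. ℓ_R(R/I) = h(I)), then R : I ⊆ R̄, i.e. every α in the total quotient ring Q(R) with αI ⊆ R is integral over R. -/

import Mathlib

/-- The length of an `R`-module `M`: the supremum of lengths of strictly
increasing chains of submodules of `M`, valued in `ℕ∞`. -/
noncomputable def modLength (R M : Type*) [CommRing R] [AddCommGroup M] [Module R M] : ℕ∞ :=
  ⨆ s : RelSeries {(x, y) : Submodule R M × Submodule R M | x < y}, (s.length : ℕ∞)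

/-- `h(M) = inf { ℓ_R(R/Im f) : f ∈ Hom_R(M,R) }`. -/
noncomputable def hInv (R M : Type*) [CommRing R] [AddCommGroup M] [Module R M] : ℕ∞ :=
  ⨅ f : M →ₗ[R] R, modLength R (R ⧸ LinearMap.range f)

section LengthTheory

variable {R M N : Type*} [CommRing R] [AddCommGroup M] [Module R M]
  [AddCommGroup N] [Module R N]

lemma le_modLength (s : LTSeries (Submodule R M)) : (s.length : ℕ∞) ≤ modLength R M :=
  le_iSup (fun s : RelSeries {(x, y) : Submodule R M × Submodule R M | x < y} =>
    (s.length : ℕ∞)) s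

lemma modLength_le {n : ℕ∞} (h : ∀ s : LTSeries (Submodule R M), (s.length : ℕ∞) ≤ n) :
    modLength R M ≤ n := iSup_le h

lemma modLength_le_of_equiv (e : M ≃ₗ[R] N) : modLength R M ≤ modLength R N := by
  refine modLength_le fun s => ?_
  have := le_modLength (s.map (Submodule.orderIsoMapComap e) (Submodule.orderIsoMapComap e).strictMono)
  simpa using this

lemma modLength_congr (e : M ≃ₗ[R] N) : modLength R M = modLength R N :=
  le_antisymm (modLength_le_of_equiv e) (modLength_le_of_equiv e.symm)

lemma modLength_eq_zero_of_subsingleton (h : Subsingleton M) : modLength R M = 0 := by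
  refine le_antisymm (modLength_le fun s => ?_) zero_le
  rcases Nat.eq_zero_or_pos s.length with h0 | h0
  · simp [h0]
  · exfalso
    have hstep := s.step ⟨0, h0⟩
    have : Subsingleton (Submodule R M) := by
      constructor; intro a b
      ext x
      have : x = 0 := Subsingleton.elim x 0
      simp [this]
    exact absurd (Subsingleton.elim _ _) (show s.toFun _ < s.toFun _ from hstep).ne

lemma exists_ne_zero_of_modLength_ne_zero (h : modLength R M ≠ 0) : True := trivial

lemma modLength_eq_zero_iff_forall_eq_zero (h : modLength R M = 0) : ∀ x : M, x = 0 := by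
  intro x
  by_contra hx
  have hlt : (⊥ : Submodule R M) < Submodule.span R {x} := by
    rw [bot_lt_iff_ne_bot, Ne, Submodule.span_singleton_eq_bot]
    exact hx
  let s : LTSeries (Submodule R M) :=
    ⟨1, fun i => if i.1 = 0 then ⊥ else Submodule.span R {x}, by
      intro i
      have : i.1 = 0 := by omega
      simp [Fin.castSucc, Fin.succ, this, hlt]⟩
  have := le_modLength s
  rw [h] at this
  simp [s] at this

lemma height_add_one_le {α : Type*} [Preorder α] {a b : α} (hab : a < b) :
    Order.height a + 1 ≤ Order.height b := by
  rw [Order.height_eq_iSup_lt_height b]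
  exact le_iSup₂ (f := fun y (_ : y < b) => Order.height y + 1) a hab

lemma prod_series_length_le {α β : Type*} [Preorder α] [Preorder β]
    (p : LTSeries (α × β)) :
    (p.length : ℕ∞) ≤ Order.height p.last.1 + Order.height p.last.2 := by
  suffices H : ∀ (n : ℕ) (p : LTSeries (α × β)), p.length = n →
      (n : ℕ∞) ≤ Order.height p.last.1 + Order.height p.last.2 by
    simpa using H p.length p rfl
  intro n
  induction n with
  | zero => intro p _; simp
  | succ n ih =>
    intro p hn
    have hlen : p.eraseLast.length = n := by simp [hn]
    have h2 := ih p.eraseLast hlen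
    have hrel : p.eraseLast.last < p.last := p.eraseLast_last_rel_last (by omega)
    rcases Prod.lt_iff.mp hrel with ⟨h1, hle⟩ | ⟨hle, h1⟩
    · calc ((n : ℕ∞) + 1)
          ≤ (Order.height p.eraseLast.last.1 + Order.height p.eraseLast.last.2) + 1 := by
            exact add_le_add_left h2 1
        _ = (Order.height p.eraseLast.last.1 + 1) + Order.height p.eraseLast.last.2 := by ring
        _ ≤ Order.height p.last.1 + Order.height p.last.2 :=
            add_le_add (height_add_one_le h1) (Order.height_mono hle)
    · calc ((n : ℕ∞) + 1)
          ≤ (Order.height p.eraseLast.last.1 + Order.height p.eraseLast.last.2) + 1 := by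
            exact add_le_add_left h2 1
        _ = Order.height p.eraseLast.last.1 + (Order.height p.eraseLast.last.2 + 1) := by ring
        _ ≤ Order.height p.last.1 + Order.height p.last.2 :=
            add_le_add (Order.height_mono hle) (height_add_one_le h1)

lemma height_le_modLength (a : Submodule R M) : Order.height a ≤ modLength R M := by
  rw [Order.height_eq_iSup_last_eq]
  exact iSup₂_le fun p _ => le_modLength p

/-- Additivity of length over a submodule and its quotient. -/
theorem modLength_additive (P : Submodule R M) :
    modLength R M = modLength R P + modLength R (M ⧸ P) := by
  apply le_antisymm
  · -- subadditivity
    refine modLength_le fun s => ?_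
    set φ : Submodule R M → Submodule R P × Submodule R (M ⧸ P) :=
      fun X => (X.comap P.subtype, X.map P.mkQ) with hφ
    have hsm : StrictMono φ := by
      intro X Y hXY
      refine lt_of_le_of_ne ⟨Submodule.comap_mono hXY.le, Submodule.map_mono hXY.le⟩ ?_
      intro heq
      have h1 : X.comap P.subtype = Y.comap P.subtype := congrArg Prod.fst heq
      have h2 : X.map P.mkQ = Y.map P.mkQ := congrArg Prod.snd heq
      have hinf : P ⊓ X = P ⊓ Y := by
        have := congrArg (Submodule.map P.subtype) h1
        rwa [Submodule.map_comap_subtype, Submodule.map_comap_subtype] at this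
      have hYle : Y ≤ X ⊔ P := by
        intro y hy
        have : P.mkQ y ∈ X.map P.mkQ := h2 ▸ Submodule.mem_map_of_mem hy
        obtain ⟨x, hx, hxy⟩ := this
        have : y - x ∈ P := by
          rw [← Submodule.Quotient.mk_eq_zero]
          have : P.mkQ (y - x) = 0 := by
            simp [map_sub, hxy]
          simpa using this
        have : y = x + (y - x) := by abel
        rw [this]
        exact Submodule.add_mem _ (Submodule.mem_sup_left hx) (Submodule.mem_sup_right ‹y - x ∈ P›)
      have hmod : (X ⊔ P) ⊓ Y = X ⊔ P ⊓ Y := sup_inf_assoc_of_le P hXY.le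
      rw [inf_eq_right.mpr hYle, ← hinf] at hmod
      have : Y = X := by rw [hmod, sup_eq_left.mpr inf_le_right]
      exact hXY.ne this.symm
    have := prod_series_length_le (s.map φ hsm)
    simp only [RelSeries.map_length] at this
    calc (s.length : ℕ∞) ≤ _ := this
      _ ≤ modLength R P + modLength R (M ⧸ P) :=
          add_le_add (height_le_modLength _) (height_le_modLength _)
  · -- superadditivity
    have hne : Nonempty (RelSeries {(x, y) : Submodule R (M ⧸ P) × Submodule R (M ⧸ P) | x < y}) :=
      ⟨RelSeries.singleton _ ⊥⟩
    have hne2 : Nonempty (RelSeries {(x, y) : Submodule R P × Submodule R P | x < y}) :=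
      ⟨RelSeries.singleton _ ⊥⟩
    rw [modLength, modLength, ENat.iSup_add, iSup_le_iff]
    intro s
    rw [ENat.add_iSup, iSup_le_iff]
    intro t
    -- now need : s.length + t.length ≤ modLength R M
    have hs : StrictMono (Submodule.map P.subtype) :=
      Submodule.map_strictMono_of_injective (Submodule.injective_subtype P)
    have ht : StrictMono (Submodule.comap P.mkQ) :=
      Submodule.comap_strictMono_of_surjective (Submodule.mkQ_surjective P)
    set s' := LTSeries.map s (Submodule.map P.subtype) hs with hs'
    set t' := LTSeries.map t (Submodule.comap P.mkQ) ht with ht'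
    have hjunct : s'.last ≤ P := by
      rw [hs', LTSeries.last_map]
      exact Submodule.map_subtype_le P _
    have hPt : P ≤ t'.head := by
      rw [ht', LTSeries.head_map]
      intro x hx
      have hx0 : P.mkQ x = 0 := by
        simpa [Submodule.Quotient.mk_eq_zero] using hx
      simp [Submodule.mem_comap, hx0]
    rcases Nat.eq_zero_or_pos t.length with h0 | h0
    · have := le_modLength s'
      rw [hs', LTSeries.map_length] at this
      calc ((s.length : ℕ∞) + t.length) = s.length := by rw [h0]; simp
        _ ≤ modLength R M := this
    · have htne : t'.length ≠ 0 := by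
        rw [ht', LTSeries.map_length]; omega
      set t'' := t'.tail htne with ht''
      have hhead : t''.head = t' ⟨1, by rw [ht', LTSeries.map_length]; omega⟩ := by
        rw [ht'']
        rfl
      have hstep : t'.head < t' ⟨1, by rw [ht', LTSeries.map_length]; omega⟩ := by
        have := t'.step ⟨0, by omega⟩
        convert this using 2 <;> simp [RelSeries.head, Fin.castSucc, Fin.succ]
      have hconnect : s'.last < t''.head := by
        rw [hhead]
        exact lt_of_le_of_lt (le_trans hjunct hPt) hstep
      have hlen : (s'.append t'' hconnect).length = s.length + t.length := by
        have h1 : s'.length = s.length := by rw [hs', LTSeries.map_length]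
        have h2 : t''.length = t'.length - 1 := by rw [ht'']; exact RelSeries.tail_length _ _
        have h3 : t'.length = t.length := by rw [ht', LTSeries.map_length]
        have h4 : (s'.append t'' hconnect).length = s'.length + t''.length + 1 :=
          RelSeries.append_length _ _ _
        omega
      have := le_modLength (s'.append t'' hconnect)
      rw [hlen] at this
      exact_mod_cast this

end LengthTheory

section Finiteness

variable {R M : Type*} [CommRing R] [AddCommGroup M] [Module R M]

lemma modLength_le_one_of_simple (h : IsSimpleModule R M) : modLength R M ≤ 1 := by
  refine modLength_le fun s => ?_
  by_contra hlen
  push_cast at hlen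
  have h2 : 2 ≤ s.length := by
    by_contra h2
    exact hlen (by exact_mod_cast Nat.le_of_lt_succ (by omega))
  have hab : s ⟨0, by omega⟩ < s ⟨1, by omega⟩ := by
    have := s.step ⟨0, by omega⟩
    convert this using 2 <;> simp [Fin.castSucc, Fin.succ] <;> omega
  have hbc : s ⟨1, by omega⟩ < s ⟨2, by omega⟩ := by
    have := s.step ⟨1, by omega⟩
    convert this using 2 <;> simp [Fin.castSucc, Fin.succ] <;> omega
  rcases h.1.2 (s ⟨1, by omega⟩) with hb | hb
  · rw [hb] at hab; exact not_lt_bot hab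
  · rw [hb] at hbc; exact not_top_lt hbc

lemma modLength_ne_top_of_isFiniteLength (h : IsFiniteLength R M) : modLength R M ≠ ⊤ := by
  induction h with
  | of_subsingleton =>
    rw [modLength_eq_zero_of_subsingleton ‹_›]
    exact ENat.zero_ne_top
  | @of_simple_quotient M _ _ P _ _ ih =>
    rw [modLength_additive P]
    exact WithTop.add_ne_top.mpr ⟨ih, by
      have := modLength_le_one_of_simple (R := R) (M := M ⧸ P) ‹_›
      intro htop
      rw [htop] at this
      exact absurd (show (⊤ : ℕ∞) ≤ 1 from this) (by simp)⟩

end Finiteness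

section RingLemmas

variable {R : Type*} [CommRing R]

lemma nzd_not_mem_minimal_prime {q : Ideal R} (hq : q ∈ minimalPrimes R)
    {w : R} (hw : w ∈ nonZeroDivisors R) : w ∉ q := by
  intro hwq
  haveI hqp : q.IsPrime := hq.1.1
  set S := Localization.AtPrime q
  have huniq : ∀ P : Ideal S, P.IsPrime → P = IsLocalRing.maximalIdeal S := by
    intro P hP
    set e := IsLocalization.orderIsoOfPrime q.primeCompl S
    have key : ∀ (P' : Ideal S) (hP' : P'.IsPrime), (e ⟨P', hP'⟩ : {p : Ideal R // p.IsPrime ∧ Disjoint (q.primeCompl : Set R) ↑p}).1 = q := by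
      intro P' hP'
      obtain ⟨p', hp'1, hp'2⟩ := (e ⟨P', hP'⟩ : {p : Ideal R // p.IsPrime ∧ Disjoint (q.primeCompl : Set R) ↑p})
      have hle : p' ≤ q := by
        intro x hx
        by_contra hxq
        exact Set.disjoint_left.mp hp'2 (show x ∈ (q.primeCompl : Set R) from hxq) hx
      exact le_antisymm hle (hq.2 ⟨hp'1, bot_le⟩ hle)
    have h1 := key P hP
    have h2 := key (IsLocalRing.maximalIdeal S) (IsLocalRing.maximalIdeal.isMaximal S).isPrime
    have : e ⟨P, hP⟩ = e ⟨IsLocalRing.maximalIdeal S, (IsLocalRing.maximalIdeal.isMaximal S).isPrime⟩ :=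
      Subtype.ext (h1.trans h2.symm)
    have := e.injective this
    exact congrArg Subtype.val this
  have hwu : ¬ IsUnit (algebraMap R S w) := by
    rw [IsLocalization.AtPrime.isUnit_to_map_iff S q w]
    exact fun hc => hc hwq
  have hwm : algebraMap R S w ∈ IsLocalRing.maximalIdeal S :=
    (IsLocalRing.mem_maximalIdeal _).mpr (mem_nonunits_iff.mpr hwu)
  have hnil : IsNilpotent (algebraMap R S w) := by
    rw [← mem_nilradical, nilradical_eq_sInf]
    refine Submodule.mem_sInf.mpr fun P hP => ?_
    rw [huniq P hP]
    exact hwm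
  obtain ⟨n, hn⟩ := hnil
  rw [← map_pow] at hn
  obtain ⟨⟨m, hm⟩, hmw⟩ := (IsLocalization.map_eq_zero_iff q.primeCompl S _).mp hn
  have hm0 : m = 0 := (mul_right_mem_nonZeroDivisors_eq_zero_iff (pow_mem hw n)).mp hmw
  exact hm (hm0 ▸ q.zero_mem)

variable [IsLocalRing R]

lemma prime_eq_maximal (hdim : ringKrullDim R = 1) {p : Ideal R} (hp : p.IsPrime)
    {w : R} (hw : w ∈ nonZeroDivisors R) (hwp : w ∈ p) :
    p = IsLocalRing.maximalIdeal R := by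
  by_contra hne
  obtain ⟨q, hq, hqle⟩ := Ideal.exists_minimalPrimes_le (I := (⊥ : Ideal R)) (J := p) bot_le
  haveI hqp : q.IsPrime := hq.1.1
  have hqlt : q < p :=
    lt_of_le_of_ne hqle (fun h => (nzd_not_mem_minimal_prime hq hw) (h ▸ hwp))
  have hplt : p < IsLocalRing.maximalIdeal R :=
    lt_of_le_of_ne (IsLocalRing.le_maximalIdeal hp.ne_top) hne
  let P0 : PrimeSpectrum R := ⟨q, hqp⟩
  let P1 : PrimeSpectrum R := ⟨p, hp⟩
  let P2 : PrimeSpectrum R := ⟨IsLocalRing.maximalIdeal R, (IsLocalRing.maximalIdeal.isMaximal R).isPrime⟩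
  let s : LTSeries (PrimeSpectrum R) :=
    ⟨2, fun i => if i.1 = 0 then P0 else if i.1 = 1 then P1 else P2, by
      intro i
      rcases i with ⟨iv, hiv⟩
      interval_cases iv
      · simpa [Fin.castSucc, Fin.succ, P0, P1, ← PrimeSpectrum.asIdeal_lt_asIdeal] using hqlt
      · simpa [Fin.castSucc, Fin.succ, P1, P2, ← PrimeSpectrum.asIdeal_lt_asIdeal] using hplt⟩
  have hlen := Order.LTSeries.length_le_krullDim s
  rw [show Order.krullDim (PrimeSpectrum R) = ringKrullDim R from rfl, hdim] at hlen
  have h2 : ((2 : ℕ∞) : WithBot ℕ∞) ≤ ((1 : ℕ∞) : WithBot ℕ∞) := by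
    exact_mod_cast hlen
  have h21 : (2 : ℕ∞) ≤ 1 := WithBot.coe_le_coe.mp h2
  exact absurd h21 (by decide)

lemma radical_eq_maximal (hdim : ringKrullDim R = 1) {J : Ideal R} (hJ : J ≠ ⊤)
    {w : R} (hw : w ∈ nonZeroDivisors R) (hwJ : w ∈ J) :
    J.radical = IsLocalRing.maximalIdeal R := by
  rw [Ideal.radical_eq_sInf]
  apply le_antisymm
  · exact sInf_le ⟨IsLocalRing.le_maximalIdeal hJ, (IsLocalRing.maximalIdeal.isMaximal R).isPrime⟩
  · refine le_sInf ?_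
    rintro p ⟨hJp, hp⟩
    exact (prime_eq_maximal hdim hp hw (hJp hwJ)).ge

variable [IsNoetherianRing R]

lemma isArtinian_of_torsion_max {M : Type*} [AddCommGroup M] [Module R M]
    [Module.Finite R M]
    (hann : ∀ r ∈ IsLocalRing.maximalIdeal R, ∀ x : M, r • x = 0) : IsArtinian R M := by
  have htor : Module.IsTorsionBySet R M (IsLocalRing.maximalIdeal R : Set R) :=
    fun x a => hann a.1 a.2 x
  letI := htor.module
  haveI : IsScalarTower R (R ⧸ IsLocalRing.maximalIdeal R) M := htor.isScalarTower
  haveI : Module.Finite (R ⧸ IsLocalRing.maximalIdeal R) M :=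
    Module.Finite.of_restrictScalars_finite R _ M
  letI : Field (R ⧸ IsLocalRing.maximalIdeal R) := Ideal.Quotient.field _
  haveI hk : IsArtinian (R ⧸ IsLocalRing.maximalIdeal R) M := isArtinian_of_fg_of_artinian'
  have hsurj : Function.Surjective (algebraMap R (R ⧸ IsLocalRing.maximalIdeal R)) := by
    rw [Ideal.Quotient.algebraMap_eq]
    exact Ideal.Quotient.mk_surjective
  set F : Submodule R M → Submodule (R ⧸ IsLocalRing.maximalIdeal R) M := fun X =>
    { carrier := X
      add_mem' := fun ha hb => X.add_mem ha hb
      zero_mem' := X.zero_mem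
      smul_mem' := by
        intro c x hx
        obtain ⟨r, rfl⟩ := hsurj c
        rw [algebraMap_smul]
        exact X.smul_mem r hx } with hF
  have hFmono : StrictMono F := by
    intro X Y hXY
    rw [SetLike.lt_iff_le_and_exists] at hXY ⊢
    obtain ⟨hle, x, hx, hnx⟩ := hXY
    exact ⟨hle, x, hx, hnx⟩
  exact ⟨Subrelation.wf (fun {A B} hAB => hFmono hAB) (InvImage.wf F hk.wf)⟩

universe v

lemma isArtinian_of_pow_smul :
    ∀ (k : ℕ) (M : Type v) [AddCommGroup M] [Module R M], Module.Finite R M →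
      ((IsLocalRing.maximalIdeal R) ^ k • (⊤ : Submodule R M) = ⊥) → IsArtinian R M := by
  intro k
  induction k with
  | zero =>
    intro M _ _ _ hsmul
    rw [pow_zero, Ideal.one_eq_top, Submodule.top_smul] at hsmul
    haveI : Subsingleton M := by
      constructor
      intro a b
      have ha : a ∈ (⊥ : Submodule R M) := hsmul ▸ Submodule.mem_top
      have hb : b ∈ (⊥ : Submodule R M) := hsmul ▸ Submodule.mem_top
      simp only [Submodule.mem_bot] at ha hb
      rw [ha, hb]
    infer_instance
  | succ k ih =>
    intro M _ _ hfg hsmul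
    set N : Submodule R M := (IsLocalRing.maximalIdeal R) ^ k • ⊤ with hN
    haveI : IsNoetherian R M := inferInstance
    haveI hNfin : Module.Finite R ↥N := by
      constructor
      rw [Submodule.fg_top]
      exact IsNoetherian.noetherian N
    have hsub : IsArtinian R ↥N := by
      apply isArtinian_of_torsion_max
      intro r hr x
      have hmem : r • (x : M) ∈ (IsLocalRing.maximalIdeal R) ^ (k + 1) • (⊤ : Submodule R M) := by
        rw [pow_succ']
        rw [mul_smul]
        exact Submodule.smul_mem_smul hr x.2
      rw [hsmul, Submodule.mem_bot] at hmem
      exact Subtype.ext (by simpa using hmem)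
    have hquot : IsArtinian R (M ⧸ N) := by
      apply ih (M ⧸ N)
      · infer_instance
      · have : (IsLocalRing.maximalIdeal R) ^ k • (⊤ : Submodule R (M ⧸ N)) =
            Submodule.map N.mkQ ((IsLocalRing.maximalIdeal R) ^ k • (⊤ : Submodule R M)) := by
          rw [Submodule.map_smul'']
          congr 1
          rw [Submodule.map_top, Submodule.range_mkQ]
        rw [this, ← hN]
        rw [eq_bot_iff]
        rintro _ ⟨x, hx, rfl⟩
        simp only [Submodule.mkQ_apply, Submodule.mem_bot, Submodule.Quotient.mk_eq_zero]
        exact hx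
    exact (isArtinian_iff_submodule_quotient N).mpr ⟨hsub, hquot⟩

lemma modLength_ne_top_main (hdim : ringKrullDim R = 1) {M : Type v} [AddCommGroup M]
    [Module R M] (hfg : Module.Finite R M) {w : R} (hw : w ∈ nonZeroDivisors R)
    (hann : ∀ x : M, w • x = 0) : modLength R M ≠ ⊤ := by
  by_cases hu : IsUnit w
  · haveI : Subsingleton M := by
      constructor
      intro a b
      have key : ∀ x : M, x = 0 := by
        intro x
        have h1 : ((hu.unit⁻¹ : Rˣ) : R) * w = 1 := hu.val_inv_mul
        calc x = (((hu.unit⁻¹ : Rˣ) : R) * w) • x := by rw [h1, one_smul]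
          _ = ((hu.unit⁻¹ : Rˣ) : R) • (w • x) := mul_smul _ _ _
          _ = 0 := by rw [hann x, smul_zero]
      rw [key a, key b]
    rw [modLength_eq_zero_of_subsingleton this]
    simp
  · have hwm : w ∈ IsLocalRing.maximalIdeal R :=
      (IsLocalRing.mem_maximalIdeal _).mpr (mem_nonunits_iff.mpr hu)
    have hspan : (Ideal.span {w} : Ideal R) ≠ ⊤ := by
      rw [Ne, Ideal.span_singleton_eq_top]
      exact hu
    have hrad := radical_eq_maximal hdim hspan hw (Ideal.mem_span_singleton_self w)
    obtain ⟨k, hk⟩ := Ideal.exists_pow_le_of_le_radical_of_fg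
      (hrad.ge : IsLocalRing.maximalIdeal R ≤ (Ideal.span {w}).radical)
      (IsNoetherian.noetherian _)
    have hsmul : (IsLocalRing.maximalIdeal R) ^ k • (⊤ : Submodule R M) = ⊥ := by
      rw [eq_bot_iff]
      refine Submodule.smul_le.mpr fun r hr x _ => ?_
      have : r ∈ Ideal.span {w} := hk hr
      obtain ⟨c, hc⟩ := Ideal.mem_span_singleton'.mp this
      rw [← hc, mul_smul, hann x, smul_zero]
      exact Submodule.zero_mem ⊥
    haveI hart := isArtinian_of_pow_smul k M hfg hsmul
    haveI : IsNoetherian R M := inferInstance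
    exact modLength_ne_top_of_isFiniteLength
      (isFiniteLength_iff_isNoetherian_isArtinian.mpr ⟨‹_›, hart⟩)

end RingLemmas

section Colength

variable {R : Type*} [CommRing R]

lemma colength_additive {J K : Ideal R} (hJK : J ≤ K) :
    modLength R (R ⧸ J) = modLength R ↥(Submodule.map J.mkQ K) + modLength R (R ⧸ K) := by
  rw [modLength_additive (Submodule.map J.mkQ K)]
  congr 1
  exact modLength_congr (Submodule.quotientQuotientEquivQuotient J K hJK)

lemma colength_mono {J K : Ideal R} (hJK : J ≤ K) :
    modLength R (R ⧸ K) ≤ modLength R (R ⧸ J) := by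
  rw [colength_additive hJK]
  exact le_add_self

lemma eq_of_colength_le {J K : Ideal R} (hJK : J ≤ K) (hfin : modLength R (R ⧸ J) ≠ ⊤)
    (hle : modLength R (R ⧸ J) ≤ modLength R (R ⧸ K)) : J = K := by
  have hadd := colength_additive hJK
  have heqc : modLength R (R ⧸ J) = modLength R (R ⧸ K) := le_antisymm hle (colength_mono hJK)
  have hKfin : modLength R (R ⧸ K) ≠ ⊤ := heqc ▸ hfin
  have hzero : modLength R ↥(Submodule.map J.mkQ K) = 0 := by
    have h1 : modLength R ↥(Submodule.map J.mkQ K) + modLength R (R ⧸ K)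
        = 0 + modLength R (R ⧸ K) := by
      rw [zero_add, ← hadd, heqc]
    exact WithTop.add_right_cancel hKfin h1
  have hall := modLength_eq_zero_iff_forall_eq_zero hzero
  refine le_antisymm hJK fun x hx => ?_
  have hmem : J.mkQ x ∈ Submodule.map J.mkQ K := Submodule.mem_map_of_mem hx
  have h0 : J.mkQ x = 0 := congrArg Subtype.val (hall ⟨J.mkQ x, hmem⟩)
  rwa [Submodule.mkQ_apply, Submodule.Quotient.mk_eq_zero] at h0

lemma colength_mul_singleton {u : R} (hu : u ∈ nonZeroDivisors R) (J : Ideal R) :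
    modLength R (R ⧸ (Ideal.span {u} * J)) =
      modLength R (R ⧸ (Ideal.span {u} : Ideal R)) + modLength R (R ⧸ J) := by
  set K : Ideal R := Ideal.span {u} * J with hK
  have hKU : K ≤ Ideal.span {u} := Ideal.mul_le_left
  rw [colength_additive hKU]
  have hiso : modLength R ↥(Submodule.map K.mkQ (Ideal.span {u} : Ideal R)) = modLength R (R ⧸ J) := by
    set ψ : R →ₗ[R] R ⧸ K := K.mkQ.comp (LinearMap.toSpanSingleton R R u) with hψ
    have hker : LinearMap.ker ψ = J := by
      ext r
      have happ : ψ r = K.mkQ (r * u) := by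
        simp [hψ, LinearMap.toSpanSingleton_apply, smul_eq_mul]
      rw [LinearMap.mem_ker, happ, Submodule.mkQ_apply, Submodule.Quotient.mk_eq_zero]
      constructor
      · intro hmem
        obtain ⟨z, hz, hzu⟩ := Ideal.mem_span_singleton_mul.mp hmem
        have hzr : z = r := by
          have h0 : (z - r) * u = 0 := by
            have h' : z * u = r * u := by rw [mul_comm z u, hzu]
            rw [sub_mul, h', sub_self]
          exact sub_eq_zero.mp ((mul_right_mem_nonZeroDivisors_eq_zero_iff hu).mp h0)
        exact hzr ▸ hz
      · intro hr
        exact Ideal.mem_span_singleton_mul.mpr ⟨r, hr, by ring⟩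
    have hrange : LinearMap.range ψ = Submodule.map K.mkQ (Ideal.span {u} : Ideal R) := by
      rw [hψ, LinearMap.range_comp, ← LinearMap.span_singleton_eq_range]
    have hcongr := modLength_congr (LinearMap.quotKerEquivRange ψ)
    rw [hker, hrange] at hcongr
    exact hcongr.symm
  rw [hiso, add_comm]

end Colength

section Integrality

theorem isIntegral_of_mul_unit_fg {R A : Type*} [CommRing R] [CommRing A] [Algebra R A]
    (N : Submodule R A) (hfg : N.FG) (u : A) (hu : IsUnit u) (huN : u ∈ N)
    (x : A) (hx : ∀ n ∈ N, x * n ∈ N) : IsIntegral R x := by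
  let A' : Subalgebra R A :=
    { carrier := { y | ∀ n ∈ N, y * n ∈ N }
      mul_mem' := fun {a b} ha hb n hn => by rw [mul_assoc]; exact ha _ (hb _ hn)
      one_mem' := fun n hn => by rwa [one_mul]
      add_mem' := fun {a b} ha hb n hn => by rw [add_mul]; exact N.add_mem (ha _ hn) (hb _ hn)
      zero_mem' := fun n _hn => by rw [zero_mul]; exact N.zero_mem
      algebraMap_mem' := fun r n hn => by
        rw [← Algebra.smul_def]; exact N.smul_mem r hn }
  let f : A' →ₐ[R] Module.End R N :=
    AlgHom.ofLinearMap
      { toFun := fun y => (LinearMap.mul R A y.1).restrict (fun n hn => y.2 n hn)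
        map_add' := by
          intro y z; ext n; simp [LinearMap.restrict_apply, LinearMap.restrict_coe_apply, add_mul]; rfl
        map_smul' := by
          intro r y; ext n; simp [LinearMap.restrict_apply, LinearMap.restrict_coe_apply, smul_mul_assoc]; rfl }
      (by ext n; simp [LinearMap.restrict_apply])
      (by intro y z; ext n; simp [LinearMap.restrict_apply, LinearMap.restrict_coe_apply, mul_assoc]; rfl)
  have hinj : Function.Injective f := by
    intro s t hst
    have h1 : s.1 * u = t.1 * u := by
      have h2 : f s ⟨u, huN⟩ = f t ⟨u, huN⟩ := by rw [hst]
      exact congrArg Subtype.val h2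
    have h3 : (s.1 * u) * (hu.unit⁻¹ : Aˣ) = (t.1 * u) * (hu.unit⁻¹ : Aˣ) := by rw [h1]
    apply Subtype.ext
    have hcanc : ∀ y : A, (y * u) * ((hu.unit⁻¹ : Aˣ) : A) = y := by
      intro y
      rw [mul_assoc]
      have : u * ((hu.unit⁻¹ : Aˣ) : A) = 1 := by
        have := hu.unit.mul_inv
        rwa [hu.unit_spec] at this
      rw [this, mul_one]
    rwa [hcanc, hcanc] at h3
  have hxA : x ∈ A' := hx
  show IsIntegral R (A'.val ⟨x, hxA⟩)
  rw [isIntegral_algHom_iff A'.val Subtype.val_injective, ← isIntegral_algHom_iff (B := Module.End R N) f hinj]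
  haveI : Module.Finite R N := ⟨(Submodule.fg_top N).mpr hfg⟩
  apply Algebra.IsIntegral.isIntegral

end Integrality

section MainColength

variable {R : Type*} [CommRing R] [IsLocalRing R] [IsNoetherianRing R]

lemma colength_ne_top (hdim : ringKrullDim R = 1) {J : Ideal R} {w : R}
    (hw : w ∈ nonZeroDivisors R) (hwJ : w ∈ J) : modLength R (R ⧸ J) ≠ ⊤ := by
  refine modLength_ne_top_main hdim inferInstance hw ?_
  intro x
  obtain ⟨r, rfl⟩ := Submodule.mkQ_surjective J x
  rw [← map_smul]
  rw [Submodule.mkQ_apply, Submodule.Quotient.mk_eq_zero]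
  rw [smul_eq_mul]
  exact J.mul_mem_right r hwJ

end MainColength

theorem stmt8' (R : Type*) [CommRing R] [IsNoetherianRing R] [IsLocalRing R]
    (hdim : ringKrullDim R = 1)
    (hdepth : ∃ x ∈ IsLocalRing.maximalIdeal R, x ∈ nonZeroDivisors R)
    (hpr : ∀ J : Ideal R, J.radical = IsLocalRing.maximalIdeal R →
      ∃ a ∈ J, ∃ n : ℕ, 0 < n ∧ J ^ (n + 1) = Ideal.span {a} * J ^ n)
    (I : Ideal R) (hreg : ∃ x ∈ I, x ∈ nonZeroDivisors R)
    (hpt : modLength R (R ⧸ I) = hInv R ↥I) :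
    ∀ α : FractionRing R,
      (∀ y ∈ I, ∃ r : R,
        algebraMap R (FractionRing R) r = α * algebraMap R (FractionRing R) y) →
      α ∈ integralClosure R (FractionRing R) := by
  intro α hα
  classical
  set φ := algebraMap R (FractionRing R) with hφ
  have hinj : Function.Injective φ :=
    IsLocalization.injective (FractionRing R) (le_refl (nonZeroDivisors R))
  obtain ⟨a, haI, ha⟩ := hreg
  set E : Ideal R := (Ideal.span {a} : Ideal R).colon I with hE
  have haE : a ∈ E := by
    rw [hE, Submodule.mem_colon]
    intro y hy
    rw [smul_eq_mul]
    exact Ideal.mul_mem_right y _ (Ideal.mem_span_singleton_self a)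
  obtain ⟨b, hb⟩ := hα a haI
  have hbE : b ∈ E := by
    rw [hE, Submodule.mem_colon]
    intro y hy
    obtain ⟨r, hr⟩ := hα y hy
    rw [smul_eq_mul, Ideal.mem_span_singleton]
    refine ⟨r, hinj ?_⟩
    rw [map_mul, map_mul, hb, hr]
    ring
  obtain ⟨e, heE, m, hm0, heq⟩ : ∃ e ∈ E, ∃ n : ℕ, 0 < n ∧
      E ^ (n + 1) = Ideal.span {e} * E ^ n := by
    by_cases hEtop : E = ⊤
    · refine ⟨1, by rw [hEtop]; trivial, 1, one_pos, ?_⟩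
      simp [hEtop, Ideal.span_singleton_one, Ideal.top_pow]
    · exact hpr E (radical_eq_maximal hdim hEtop ha haE)
  have he : e ∈ nonZeroDivisors R := by
    have h1 : a ^ (m + 1) ∈ E ^ (m + 1) := Ideal.pow_mem_pow haE (m + 1)
    rw [heq] at h1
    have h2 : a ^ (m + 1) ∈ Ideal.span {e} := Ideal.mul_le_left h1
    obtain ⟨s, hs⟩ := Ideal.mem_span_singleton.mp h2
    rw [mem_nonZeroDivisors_iff_right]
    intro z hz
    have h3 : z * a ^ (m + 1) = 0 := by
      rw [hs, ← mul_assoc, hz, zero_mul]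
    exact (mul_right_mem_nonZeroDivisors_eq_zero_iff (pow_mem ha (m + 1))).mp h3
  -- the multiplication-by-(e/a) map on I
  have heI : ∀ y : ↥I, ∃ r : R, e * (y : R) = a * r := by
    intro y
    have h1 := Submodule.mem_colon.mp heE (y : R) y.2
    rw [smul_eq_mul] at h1
    obtain ⟨r, hr⟩ := Ideal.mem_span_singleton.mp h1
    exact ⟨r, hr⟩
  choose g hg using heI
  have hcancel : ∀ {r s : R}, a * r = a * s → r = s := by
    intro r s h
    have h0 : (r - s) * a = 0 := by
      rw [sub_mul, mul_comm r a, mul_comm s a, h, sub_self]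
    exact sub_eq_zero.mp ((mul_right_mem_nonZeroDivisors_eq_zero_iff ha).mp h0)
  set f : ↥I →ₗ[R] R :=
    { toFun := g
      map_add' := by
        intro y z
        apply hcancel
        rw [← hg (y + z), Submodule.coe_add, mul_add, hg y, hg z, mul_add]
      map_smul' := by
        intro c y
        apply hcancel
        rw [← hg (c • y), RingHom.id_apply, Submodule.coe_smul, smul_eq_mul, smul_eq_mul]
        rw [mul_left_comm e c, hg y, mul_left_comm c a] } with hf
  set G : Ideal R := LinearMap.range f with hG
  have hfa : ∀ y : ↥I, a * f y = e * (y : R) := fun y => (hg y).symm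
  have heG : e ∈ G := by
    refine ⟨⟨a, haI⟩, hcancel ?_⟩
    rw [hfa ⟨a, haI⟩]
    exact mul_comm e a
  have hkey1 : Ideal.span {a} * G = Ideal.span {e} * I := by
    apply le_antisymm
    · rw [Ideal.span_singleton_mul_le_iff]
      rintro z ⟨y, rfl⟩
      rw [hfa y]
      exact Ideal.mul_mem_mul (Ideal.mem_span_singleton_self e) y.2
    · rw [Ideal.span_singleton_mul_le_iff]
      intro y hy
      have : e * y = a * f ⟨y, hy⟩ := hg ⟨y, hy⟩
      rw [this]
      exact Ideal.mul_mem_mul (Ideal.mem_span_singleton_self a) ⟨⟨y, hy⟩, rfl⟩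
  -- length comparisons
  have hIc : modLength R (R ⧸ I) ≠ ⊤ := colength_ne_top hdim ha haI
  have hec : modLength R (R ⧸ (Ideal.span {e} : Ideal R)) ≠ ⊤ :=
    colength_ne_top hdim he (Ideal.mem_span_singleton_self e)
  have hGfin : modLength R (R ⧸ G) ≠ ⊤ := by
    intro htop
    apply hec
    have := colength_mono (Ideal.span_le.mpr (Set.singleton_subset_iff.mpr heG))
    rw [htop] at this
    exact top_le_iff.mp this
  have hptle : modLength R (R ⧸ I) ≤ modLength R (R ⧸ G) := by
    rw [hpt]
    exact iInf_le (fun f : ↥I →ₗ[R] R => modLength R (R ⧸ LinearMap.range f)) f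
  have hae : modLength R (R ⧸ (Ideal.span {a} : Ideal R))
      ≤ modLength R (R ⧸ (Ideal.span {e} : Ideal R)) := by
    have h1 := colength_mul_singleton ha G
    have h2 := colength_mul_singleton he I
    rw [hkey1, h2] at h1
    -- h1 : c(span e) + c I = c(span a) + c G
    have h3 : modLength R (R ⧸ (Ideal.span {a} : Ideal R)) + modLength R (R ⧸ G)
        ≤ modLength R (R ⧸ (Ideal.span {e} : Ideal R)) + modLength R (R ⧸ G) := by
      rw [← h1]
      exact add_le_add_right hptle _
    exact (WithTop.add_le_add_iff_right hGfin).mp h3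
  have hspanE : Ideal.span {a} ≤ E := Ideal.span_le.mpr (Set.singleton_subset_iff.mpr haE)
  have hsub : Ideal.span {a} * E ^ m ≤ Ideal.span {e} * E ^ m := by
    calc Ideal.span {a} * E ^ m ≤ E * E ^ m := Ideal.mul_mono hspanE le_rfl
      _ = E ^ (m + 1) := (pow_succ' E m).symm
      _ = Ideal.span {e} * E ^ m := heq
  have hkey2 : Ideal.span {a} * E ^ m = Ideal.span {e} * E ^ m := by
    apply eq_of_colength_le hsub
    · exact colength_ne_top hdim (mul_mem ha (pow_mem he m))
        (Ideal.mul_mem_mul (Ideal.mem_span_singleton_self a) (Ideal.pow_mem_pow heE m))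
    · rw [colength_mul_singleton ha (E ^ m), colength_mul_singleton he (E ^ m)]
      exact add_le_add_left hae _
  -- integrality
  set N : Submodule R (FractionRing R) :=
    Submodule.map (Algebra.linearMap R (FractionRing R)) (E ^ m : Ideal R) with hN
  have hNfg : N.FG := Submodule.FG.map _ (IsNoetherian.noetherian _)
  have hunit : IsUnit (φ (e ^ m)) :=
    IsLocalization.map_units (FractionRing R) ⟨e ^ m, pow_mem he m⟩
  have huN : φ (e ^ m) ∈ N := ⟨e ^ m, Ideal.pow_mem_pow heE m, rfl⟩
  have haunit : IsUnit (φ a) := IsLocalization.map_units (FractionRing R) ⟨a, ha⟩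
  have hstab : ∀ z ∈ N, α * z ∈ N := by
    rintro z ⟨x, hx, rfl⟩
    have h1 : b * x ∈ Ideal.span {a} * E ^ m := by
      have hbx : b * x ∈ E ^ (m + 1) := by
        rw [pow_succ']
        exact Ideal.mul_mem_mul hbE hx
      rw [heq, ← hkey2] at hbx
      exact hbx
    obtain ⟨z', hz', hz'eq⟩ := Ideal.mem_span_singleton_mul.mp h1
    refine ⟨z', hz', ?_⟩
    have hgoal : φ a * φ z' = φ a * (α * φ x) := by
      rw [← map_mul, hz'eq, map_mul, hb]
      ring
    have hthis := haunit.mul_left_cancel hgoal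
    rw [Algebra.linearMap_apply, Algebra.linearMap_apply, ← hφ, hthis]
  exact isIntegral_of_mul_unit_fg N hNfg _ hunit huN α hstab

/-- Let `(R, m)` be a one-dimensional Cohen-Macaulay local ring in which
every `m`-primary ideal has a principal reduction, and let `I` be a regular ideal.  If `I`
is a partial trace ideal of itself (`ℓ_R(R/I) = h(I)`), then `R : I ⊆ R̄`: every
`α ∈ Q(R)` with `αI ⊆ R` is integral over `R`. -/
theorem stmt8 (R : Type*) [CommRing R] [IsNoetherianRing R] [IsLocalRing R]
    (hdim : ringKrullDim R = 1)
    (hdepth : ∃ x ∈ IsLocalRing.maximalIdeal R, x ∈ nonZeroDivisors R)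
    (hpr : ∀ J : Ideal R, J.radical = IsLocalRing.maximalIdeal R →
      ∃ a ∈ J, ∃ n : ℕ, 0 < n ∧ J ^ (n + 1) = Ideal.span {a} * J ^ n)
    (I : Ideal R) (hreg : ∃ x ∈ I, x ∈ nonZeroDivisors R)
    (hpt : modLength R (R ⧸ I) = hInv R ↥I) :
    ∀ α : FractionRing R,
      (∀ y ∈ I, ∃ r : R,
        algebraMap R (FractionRing R) r = α * algebraMap R (FractionRing R) y) →
      α ∈ integralClosure R (FractionRing R) := by
  exact stmt8' R hdim hdepth hpr I hreg hpt
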